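/- Let $d \ge 0$ and let $v:(0,\infty)\to\mathbb{R}$ be differentiable with $x v'(x) \to 0$ as $x\to\infty$. Then for each $x > 0$, $\lim_{\mu \downarrow 0}\; \mu^{d}\, e^{v(1/\mu)} \sum_{k \ge x/\mu} k^{d-1} e^{-\mu k - v(k)} = \Gamma(x; d) := \int_x^\infty y^{d-1} e^{-y}\, dy$. -/

import Mathlib

open Filter Set MeasureTheory

/-- If `x v'(x) → 0` at infinity, then `v` is `ε`-Lipschitz in log-coordinates
far enough out. -/
lemma aux_log_lip (v : ℝ → ℝ)
    (hdiff : ∀ y ∈ Set.Ioi (0:ℝ), DifferentiableAt ℝ v y)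
    (hv : Tendsto (fun y => y * deriv v y) atTop (nhds 0)) {ε : ℝ} (hε : 0 < ε) :
    ∃ T : ℝ, 1 ≤ T ∧ ∀ a b : ℝ, T ≤ a → T ≤ b →
      |v a - v b| ≤ ε * |Real.log a - Real.log b| := by
  set w : ℝ → ℝ := fun t => v (Real.exp t) with hw
  set w' : ℝ → ℝ := fun t => Real.exp t * deriv v (Real.exp t) with hw'
  have hder : ∀ t : ℝ, HasDerivAt w (w' t) t := by
    intro t
    have h2 : HasDerivAt v (deriv v (Real.exp t)) (Real.exp t) :=
      (hdiff _ (Real.exp_pos t)).hasDerivAt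
    simpa [hw, hw', mul_comm, Function.comp_def] using h2.comp t (Real.hasDerivAt_exp t)
  have h3 : Tendsto w' atTop (nhds 0) := hv.comp Real.tendsto_exp_atTop
  have h4 : ∀ᶠ t in atTop, ‖w' t‖ ≤ ε := by
    filter_upwards [h3.eventually (Metric.closedBall_mem_nhds (0:ℝ) hε)] with t ht
    simpa [Real.dist_eq] using ht
  obtain ⟨T₀, hT₀⟩ := eventually_atTop.mp h4
  refine ⟨max 1 (Real.exp T₀), le_max_left _ _, ?_⟩
  intro a b ha hb
  have ha0 : (0:ℝ) < a := lt_of_lt_of_le one_pos ((le_max_left _ _).trans ha)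
  have hb0 : (0:ℝ) < b := lt_of_lt_of_le one_pos ((le_max_left _ _).trans hb)
  have hla : T₀ ≤ Real.log a := by
    rw [Real.le_log_iff_exp_le ha0]; exact (le_max_right _ _).trans ha
  have hlb : T₀ ≤ Real.log b := by
    rw [Real.le_log_iff_exp_le hb0]; exact (le_max_right _ _).trans hb
  have key := (convex_Ici T₀).norm_image_sub_le_of_norm_hasDerivWithin_le
    (f := w) (f' := w') (fun t ht => (hder t).hasDerivWithinAt)
    (fun t ht => hT₀ t ht) hlb hla
  have hwa : w (Real.log a) = v a := by rw [hw]; simp [Real.exp_log ha0]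
  have hwb : w (Real.log b) = v b := by rw [hw]; simp [Real.exp_log hb0]
  rw [hwa, hwb] at key
  simpa [Real.norm_eq_abs] using key

/-- `μ ⌊y/μ⌋ → y` as `μ → 0⁺`. -/
lemma aux_floor_mul_tendsto {y : ℝ} (hy : 0 < y) :
    Tendsto (fun μ : ℝ => μ * (⌊y/μ⌋₊ : ℝ)) (nhdsWithin 0 (Set.Ioi 0)) (nhds y) := by
  have hmem : ∀ᶠ μ in nhdsWithin (0:ℝ) (Set.Ioi 0), μ ∈ Set.Ioi (0:ℝ) :=
    eventually_mem_nhdsWithin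
  have hlow : ∀ᶠ μ in nhdsWithin (0:ℝ) (Set.Ioi 0), y - μ ≤ μ * (⌊y/μ⌋₊ : ℝ) := by
    filter_upwards [hmem] with μ hμ
    have hμ' : (0:ℝ) < μ := hμ
    have h1 : y/μ - 1 < (⌊y/μ⌋₊ : ℝ) := Nat.sub_one_lt_floor _
    have := mul_lt_mul_of_pos_left h1 hμ'
    rw [mul_sub, mul_one, mul_div_cancel₀ _ hμ'.ne'] at this
    linarith
  have hhigh : ∀ᶠ μ in nhdsWithin (0:ℝ) (Set.Ioi 0), μ * (⌊y/μ⌋₊ : ℝ) ≤ y := by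
    filter_upwards [hmem] with μ hμ
    have hμ' : (0:ℝ) < μ := hμ
    have h1 : (⌊y/μ⌋₊ : ℝ) ≤ y/μ := Nat.floor_le (div_nonneg hy.le hμ'.le)
    calc μ * (⌊y/μ⌋₊ : ℝ) ≤ μ * (y/μ) := by
          exact mul_le_mul_of_nonneg_left h1 hμ'.le
      _ = y := mul_div_cancel₀ _ hμ'.ne'
  have hltend : Tendsto (fun μ : ℝ => y - μ) (nhdsWithin 0 (Set.Ioi 0)) (nhds y) := by
    have : Tendsto (fun μ : ℝ => y - μ) (nhds 0) (nhds (y - 0)) :=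
      (tendsto_const_nhds.sub tendsto_id)
    simpa using this.mono_left nhdsWithin_le_nhds
  exact tendsto_of_tendsto_of_tendsto_of_le_of_le' hltend tendsto_const_nhds hlow hhigh

/-- `⌊y/μ⌋ → ∞` as `μ → 0⁺`. -/
lemma aux_floor_tendsto_atTop {y : ℝ} (hy : 0 < y) :
    Tendsto (fun μ : ℝ => ((⌊y/μ⌋₊ : ℕ) : ℝ)) (nhdsWithin 0 (Set.Ioi 0)) atTop := by
  have hinv : Tendsto (fun μ : ℝ => y / μ) (nhdsWithin 0 (Set.Ioi 0)) atTop := by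
    have h1 : Tendsto (fun μ : ℝ => μ⁻¹) (nhdsWithin 0 (Set.Ioi 0)) atTop :=
      tendsto_inv_nhdsGT_zero
    have := h1.const_mul_atTop hy
    simpa [div_eq_mul_inv] using this
  have h2 : Tendsto (fun μ : ℝ => y / μ - 1) (nhdsWithin 0 (Set.Ioi 0)) atTop :=
    hinv.atTop_add tendsto_const_nhds
  refine tendsto_atTop_mono (fun μ => ?_) h2
  exact (Nat.sub_one_lt_floor _).le

/-- The exponential of `½|log u|` is at most `√u + 1/√u`. -/
lemma aux_exp_half_abs_log {u : ℝ} (hu : 0 < u) :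
    Real.exp (2⁻¹ * |Real.log u|) ≤ u ^ ((2:ℝ)⁻¹) + u ^ (-(2:ℝ)⁻¹) := by
  have h1 : u ^ ((2:ℝ)⁻¹) = Real.exp ((2:ℝ)⁻¹ * Real.log u) := by
    rw [Real.rpow_def_of_pos hu, mul_comm]
  have h2 : u ^ (-(2:ℝ)⁻¹) = Real.exp (-((2:ℝ)⁻¹ * Real.log u)) := by
    rw [Real.rpow_def_of_pos hu]; ring_nf
  rcases abs_cases (Real.log u) with ⟨h, _⟩ | ⟨h, _⟩
  · rw [h, h1]
    nlinarith [Real.exp_pos (-((2:ℝ)⁻¹ * Real.log u)), le_refl (Real.exp (2⁻¹ * Real.log u))]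
  · rw [h]
    have h3 : (2:ℝ)⁻¹ * -Real.log u = -((2:ℝ)⁻¹ * Real.log u) := by ring
    rw [h3, ← h2]
    nlinarith [Real.rpow_pos_of_pos hu ((2:ℝ)⁻¹)]


/-- `√t ≤ 1 + t` for `t ≥ 0`. -/
lemma aux_sqrt_le {t : ℝ} (ht : 0 ≤ t) : t ^ ((2:ℝ)⁻¹) ≤ 1 + t := by
  rcases le_or_gt t 1 with h | h
  · have : t ^ ((2:ℝ)⁻¹) ≤ 1 := Real.rpow_le_one ht h (by norm_num)
    linarith
  · have h1 : t ^ ((2:ℝ)⁻¹) ≤ t ^ (1:ℝ) :=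
      Real.rpow_le_rpow_of_exponent_le h.le (by norm_num)
    rw [Real.rpow_one] at h1
    linarith

/-- Algebraic identity for the step function value. -/
lemma aux_F_eq (d x : ℝ) (v : ℝ → ℝ) {μ : ℝ} (hμ : 0 < μ) {k : ℕ}
    (hind : x ≤ μ * (k:ℝ)) :
    μ ^ d * Real.exp (v (1/μ)) *
      (if x ≤ μ * (k:ℝ) then (k:ℝ) ^ (d-1) * Real.exp (-(μ * (k:ℝ)) - v k) else 0) / μ
    = (μ * (k:ℝ)) ^ (d-1) * Real.exp (-(μ * (k:ℝ))) * Real.exp (v (1/μ) - v k) := by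
  rw [if_pos hind]
  have e1 : Real.exp (-(μ * (k:ℝ)) - v k) * Real.exp (v (1/μ))
      = Real.exp (-(μ * (k:ℝ))) * Real.exp (v (1/μ) - v k) := by
    rw [← Real.exp_add, ← Real.exp_add]; ring_nf
  have e2 : (μ * (k:ℝ)) ^ (d-1) = μ ^ (d-1) * (k:ℝ) ^ (d-1) :=
    Real.mul_rpow hμ.le (Nat.cast_nonneg k)
  have e3 : μ ^ (d-1) = μ ^ d / μ := by
    rw [Real.rpow_sub hμ, Real.rpow_one]
  rw [e2, e3]
  linear_combination (μ ^ d * (k:ℝ) ^ (d-1) / μ) * e1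

theorem incomplete_gamma_limit
    (d : ℝ) (hd : 0 ≤ d)
    (v : ℝ → ℝ)
    (hdiff : ∀ y ∈ Set.Ioi (0:ℝ), DifferentiableAt ℝ v y)
    (hv : Tendsto (fun y => y * deriv v y) atTop (nhds 0))
    (x : ℝ) (hx : 0 < x) :
    Tendsto
      (fun μ : ℝ => μ ^ d * Real.exp (v (1 / μ)) *
        ∑' k : ℕ, if x ≤ μ * k then (k : ℝ) ^ (d - 1) * Real.exp (-(μ * k) - v k) else 0)
      (nhdsWithin 0 (Set.Ioi 0))
      (nhds (∫ y in Set.Ioi x, y ^ (d - 1) * Real.exp (-y))) := by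
  classical
  set l := nhdsWithin (0:ℝ) (Set.Ioi 0) with hldef
  obtain ⟨T, hT1, hT⟩ := aux_log_lip v hdiff hv (by norm_num : (0:ℝ) < 2⁻¹)
  have hT0 : (0:ℝ) < T := lt_of_lt_of_le one_pos hT1
  set F : ℝ → ℝ → ℝ := fun μ y =>
    μ ^ d * Real.exp (v (1 / μ)) *
      (if x ≤ μ * ((⌊y/μ⌋₊ : ℕ) : ℝ) then ((⌊y/μ⌋₊ : ℕ) : ℝ) ^ (d - 1) *
        Real.exp (-(μ * ((⌊y/μ⌋₊ : ℕ) : ℝ)) - v (⌊y/μ⌋₊ : ℕ)) else 0) / μ with hFdef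
  set D : ℝ → ℝ := fun y => (Real.exp 1 / x) *
      ((1 + x ^ (-(2:ℝ)⁻¹)) * y ^ d + y ^ (d+1)) * Real.exp (-y) with hDdef
  set f : ℝ → ℝ := Set.indicator (Set.Ioi x) (fun y => y ^ (d-1) * Real.exp (-y)) with hfdef
  set ν : Measure ℝ := volume.restrict (Set.Ici 0) with hνdef
  -- measurability
  have hmeas : ∀ μ : ℝ, AEStronglyMeasurable (F μ) ν := by
    intro μ
    have hfl : Measurable (fun y : ℝ => (⌊y/μ⌋₊ : ℕ)) :=
      Nat.measurable_floor.comp (measurable_id.div_const μ)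
    have : Measurable (F μ) := by
      apply Measurable.div_const
      apply Measurable.const_mul
      exact (measurable_from_nat (f := fun k : ℕ => if x ≤ μ * (k:ℝ) then (k:ℝ) ^ (d-1) *
        Real.exp (-(μ * (k:ℝ)) - v k) else 0)).comp hfl
    exact this.aestronglyMeasurable
  -- the pointwise bound
  have hFbound : ∀ μ : ℝ, 0 < μ → μ ≤ 1 → T ≤ 1/μ → μ * T ≤ x →
      ∀ y, 0 ≤ y → ‖F μ y‖ ≤ D y := by
    intro μ hμ hμ1 hμT hμTx y hy
    set k := ⌊y/μ⌋₊ with hkdef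
    by_cases hind : x ≤ μ * (k:ℝ)
    · have hk0 : (0:ℝ) < (k:ℝ) := by
        rcases (Nat.cast_nonneg k : (0:ℝ) ≤ k).lt_or_eq with h | h
        · exact h
        · exfalso; rw [← h] at hind; simp at hind; linarith
      set u := μ * (k:ℝ) with hu
      have hu0 : (0:ℝ) < u := lt_of_lt_of_le hx hind
      have huy : u ≤ y := by
        have h1 : (k:ℝ) ≤ y/μ := Nat.floor_le (div_nonneg hy hμ.le)
        calc u ≤ μ * (y/μ) := mul_le_mul_of_nonneg_left h1 hμ.le
          _ = y := mul_div_cancel₀ _ hμ.ne'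
      have hy0 : (0:ℝ) < y := lt_of_lt_of_le hu0 huy
      have huy1 : y - 1 ≤ u := by
        have h1 : y/μ - 1 < (k:ℝ) := Nat.sub_one_lt_floor _
        have h2 := mul_lt_mul_of_pos_left h1 hμ
        rw [mul_sub, mul_one, mul_div_cancel₀ _ hμ.ne'] at h2
        nlinarith
      have hkT : T ≤ (k:ℝ) := by
        have : μ * T ≤ μ * (k:ℝ) := le_trans hμTx hind
        exact le_of_mul_le_mul_left this hμ
      have hvb := hT (1/μ) (k:ℝ) hμT hkT
      have hlogeq : Real.log (1/μ) - Real.log (k:ℝ) = -(Real.log u) := by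
        rw [hu, Real.log_mul hμ.ne' hk0.ne', one_div, Real.log_inv]; ring
      rw [hlogeq, abs_neg] at hvb
      have hE : Real.exp (v (1/μ) - v (k:ℕ)) ≤ 1 + y + x ^ (-(2:ℝ)⁻¹) := by
        calc Real.exp (v (1/μ) - v (k:ℕ)) ≤ Real.exp (2⁻¹ * |Real.log u|) :=
              Real.exp_le_exp.2 (le_trans (le_abs_self _) hvb)
          _ ≤ u ^ ((2:ℝ)⁻¹) + u ^ (-(2:ℝ)⁻¹) := aux_exp_half_abs_log hu0
          _ ≤ (1 + y) + x ^ (-(2:ℝ)⁻¹) := by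
              apply add_le_add
              · exact le_trans (Real.rpow_le_rpow hu0.le huy (by norm_num)) (aux_sqrt_le hy0.le)
              · exact Real.rpow_le_rpow_of_nonpos hx hind (by norm_num)
          _ = 1 + y + x ^ (-(2:ℝ)⁻¹) := by ring
      have hexp : Real.exp (-u) ≤ Real.exp 1 * Real.exp (-y) := by
        rw [← Real.exp_add]
        exact Real.exp_le_exp.2 (by linarith)
      have hud : u ^ (d-1) ≤ y ^ d / x := by
        rw [Real.rpow_sub hu0, Real.rpow_one]
        exact div_le_div₀ (Real.rpow_nonneg hy0.le d)
          (Real.rpow_le_rpow hu0.le huy hd) hx hind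
      have hFval : F μ y = u ^ (d-1) * Real.exp (-u) * Real.exp (v (1/μ) - v (k:ℕ)) := by
        rw [hFdef]
        exact aux_F_eq d x v hμ hind
      rw [hFval, Real.norm_eq_abs, abs_of_nonneg (by positivity)]
      have hstep : u ^ (d-1) * Real.exp (-u) * Real.exp (v (1/μ) - v (k:ℕ))
          ≤ (y ^ d / x) * (Real.exp 1 * Real.exp (-y)) * (1 + y + x ^ (-(2:ℝ)⁻¹)) := by
        apply mul_le_mul _ hE (Real.exp_pos _).le (by positivity)
        exact mul_le_mul hud hexp (Real.exp_pos _).le (by positivity)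
      refine le_trans hstep (le_of_eq ?_)
      have hpow : y ^ (d+1) = y ^ d * y := Real.rpow_add_one hy0.ne' d
      show _ = Real.exp 1 / x * ((1 + x ^ (-(2:ℝ)⁻¹)) * y ^ d + y ^ (d+1)) * Real.exp (-y)
      rw [hpow]; ring
    · rw [hFdef]
      simp only [if_neg hind, if_neg (show ¬ x ≤ μ * ((⌊y/μ⌋₊ : ℕ) : ℝ) from hind), mul_zero, zero_div, norm_zero]
      rw [hDdef]; beta_reduce; positivity
  -- eventual goodness
  have hgood : ∀ᶠ μ in l, 0 < μ ∧ μ ≤ 1 ∧ T ≤ 1/μ ∧ μ * T ≤ x := by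
    have hc : (0:ℝ) < min 1 (min (1/T) (x/T)) := by positivity
    have h2 : ∀ᶠ μ in l, μ < min 1 (min (1/T) (x/T)) :=
      nhdsWithin_le_nhds (Iio_mem_nhds hc)
    filter_upwards [eventually_mem_nhdsWithin, h2] with μ h0 h1
    have h0' : (0:ℝ) < μ := h0
    have hb1 : μ < 1 := lt_of_lt_of_le h1 (min_le_left _ _)
    have hb2 : μ < 1/T := lt_of_lt_of_le h1 ((min_le_right _ _).trans (min_le_left _ _))
    have hb3 : μ < x/T := lt_of_lt_of_le h1 ((min_le_right _ _).trans (min_le_right _ _))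
    refine ⟨h0', hb1.le, ?_, ?_⟩
    · rw [le_div_iff₀ h0']
      rw [lt_div_iff₀ hT0] at hb2
      linarith
    · rw [lt_div_iff₀ hT0] at hb3
      linarith
  -- dominating function is integrable
  have hDint : Integrable D ν := by
    have i1 : IntegrableOn (fun y : ℝ => Real.exp (-y) * y ^ d) (Set.Ioi 0) := by
      have := Real.GammaIntegral_convergent (s := d + 1) (by linarith)
      simpa using this
    have i2 : IntegrableOn (fun y : ℝ => Real.exp (-y) * y ^ (d+1)) (Set.Ioi 0) := by
      have := Real.GammaIntegral_convergent (s := d + 2) (by linarith)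
      have h : d + 2 - 1 = d + 1 := by ring
      rw [h] at this
      exact this
    have i1' : IntegrableOn (fun y : ℝ => Real.exp (-y) * y ^ d) (Set.Ici 0) :=
      (integrableOn_Ici_iff_integrableOn_Ioi (by simp)).2 i1
    have i2' : IntegrableOn (fun y : ℝ => Real.exp (-y) * y ^ (d+1)) (Set.Ici 0) :=
      (integrableOn_Ici_iff_integrableOn_Ioi (by simp)).2 i2
    have hDeq : D = fun y => (Real.exp 1 / x) * (1 + x ^ (-(2:ℝ)⁻¹)) *
        (Real.exp (-y) * y ^ d) + (Real.exp 1 / x) * (Real.exp (-y) * y ^ (d+1)) := by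
      funext y; rw [hDdef]; ring
    rw [hνdef, hDeq]
    exact (i1'.const_mul _).add (i2'.const_mul _)
  -- eventual bound
  have hbound : ∀ᶠ μ in l, ∀ᵐ y ∂ν, ‖F μ y‖ ≤ D y := by
    filter_upwards [hgood] with μ ⟨h0, h1, h2, h3⟩
    filter_upwards [ae_restrict_mem measurableSet_Ici] with y hy
    exact hFbound μ h0 h1 h2 h3 y hy
  -- pointwise limit
  have hptw : ∀ y, 0 ≤ y → y ≠ x → Tendsto (fun μ => F μ y) l (nhds (f y)) := by
    intro y hy hne
    rcases lt_or_gt_of_ne hne with hlt | hgt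
    · have hf0 : f y = 0 := by
        rw [hfdef]
        exact Set.indicator_of_notMem (by rw [Set.mem_Ioi]; exact not_lt.2 hlt.le) _
      rw [hf0]
      apply Tendsto.congr' _ tendsto_const_nhds
      filter_upwards [eventually_mem_nhdsWithin] with μ hμ
      have hμ' : (0:ℝ) < μ := hμ
      have hle : μ * ((⌊y/μ⌋₊ : ℕ):ℝ) ≤ y := by
        have h1 : ((⌊y/μ⌋₊:ℕ):ℝ) ≤ y/μ := Nat.floor_le (div_nonneg hy hμ'.le)
        calc μ * ((⌊y/μ⌋₊:ℕ):ℝ) ≤ μ * (y/μ) := mul_le_mul_of_nonneg_left h1 hμ'.le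
          _ = y := mul_div_cancel₀ _ hμ'.ne'
      rw [hFdef]
      simp only [if_neg (by linarith : ¬ x ≤ μ * ((⌊y/μ⌋₊:ℕ):ℝ)), mul_zero, zero_div]
    · have hy0 : (0:ℝ) < y := lt_trans hx hgt
      have hu := aux_floor_mul_tendsto hy0
      have hk := aux_floor_tendsto_atTop hy0
      have hind : ∀ᶠ μ in l, x ≤ μ * ((⌊y/μ⌋₊:ℕ):ℝ) := by
        filter_upwards [hu.eventually (lt_mem_nhds hgt)] with μ h using h.le
      -- v part
      have hvv : Tendsto (fun μ => v (1/μ) - v (⌊y/μ⌋₊ : ℕ)) l (nhds 0) := by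
        rw [Metric.tendsto_nhds]
        intro ε hε
        have hc : (0:ℝ) < |Real.log y| + 1 := by positivity
        have hεpos : 0 < ε / (2 * (|Real.log y| + 1)) := by positivity
        obtain ⟨T', hT'1, hT'⟩ := aux_log_lip v hdiff hv hεpos
        have hinv : Tendsto (fun μ : ℝ => 1/μ) l atTop := by
          simpa [one_div] using (tendsto_inv_nhdsGT_zero :
            Tendsto (fun μ : ℝ => μ⁻¹) (nhdsWithin 0 (Set.Ioi 0)) atTop)
        have e1 : ∀ᶠ μ in l, T' ≤ 1/μ := hinv.eventually_ge_atTop T'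
        have e2 : ∀ᶠ μ in l, T' ≤ ((⌊y/μ⌋₊ : ℕ):ℝ) := hk.eventually_ge_atTop T'
        have hlogu : Tendsto (fun μ => |Real.log (μ * ((⌊y/μ⌋₊:ℕ):ℝ))|) l
            (nhds |Real.log y|) := ((Real.continuousAt_log hy0.ne').tendsto.comp hu).abs
        have e3 : ∀ᶠ μ in l, |Real.log (μ * ((⌊y/μ⌋₊:ℕ):ℝ))| < |Real.log y| + 1 :=
          hlogu.eventually_lt_const (by linarith)
        filter_upwards [eventually_mem_nhdsWithin, e1, e2, e3] with μ h0 h1 h2 h3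
        have hμ' : (0:ℝ) < μ := h0
        have hk0 : (0:ℝ) < ((⌊y/μ⌋₊:ℕ):ℝ) :=
          lt_of_lt_of_le (lt_of_lt_of_le one_pos hT'1) h2
        have hvb := hT' (1/μ) ((⌊y/μ⌋₊:ℕ):ℝ) h1 h2
        have hlog : Real.log (1/μ) - Real.log ((⌊y/μ⌋₊:ℕ):ℝ)
            = -(Real.log (μ * ((⌊y/μ⌋₊:ℕ):ℝ))) := by
          rw [Real.log_mul hμ'.ne' hk0.ne', one_div, Real.log_inv]; ring
        rw [hlog, abs_neg] at hvb
        rw [Real.dist_eq, sub_zero]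
        calc |v (1/μ) - v (⌊y/μ⌋₊ : ℕ)| ≤ ε / (2 * (|Real.log y| + 1)) *
              |Real.log (μ * ((⌊y/μ⌋₊:ℕ):ℝ))| := hvb
          _ ≤ ε / (2 * (|Real.log y| + 1)) * (|Real.log y| + 1) :=
              mul_le_mul_of_nonneg_left h3.le (by positivity)
          _ = ε / 2 := by field_simp
          _ < ε := by linarith
      have t1 : Tendsto (fun μ => (μ * ((⌊y/μ⌋₊:ℕ):ℝ)) ^ (d-1)) l (nhds (y ^ (d-1))) :=
        ((Real.continuousAt_rpow_const y (d-1) (Or.inl hy0.ne')).tendsto).comp hu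
      have t2 : Tendsto (fun μ => Real.exp (-(μ * ((⌊y/μ⌋₊:ℕ):ℝ)))) l
          (nhds (Real.exp (-y))) := (Real.continuous_exp.tendsto _).comp hu.neg
      have t3 : Tendsto (fun μ => Real.exp (v (1/μ) - v (⌊y/μ⌋₊ : ℕ))) l (nhds 1) := by
        have := (Real.continuous_exp.tendsto (0:ℝ)).comp hvv
        simpa [Function.comp_def] using this
      have hfy : f y = y ^ (d-1) * Real.exp (-y) := by
        rw [hfdef]; exact Set.indicator_of_mem hgt _
      have hcomb := (t1.mul t2).mul t3
      rw [mul_one] at hcomb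
      rw [hfy]
      apply Tendsto.congr' _ hcomb
      filter_upwards [eventually_mem_nhdsWithin, hind] with μ h0 h1
      have hFeq : F μ y = (μ * ((⌊y/μ⌋₊:ℕ):ℝ)) ^ (d-1) *
          Real.exp (-(μ * ((⌊y/μ⌋₊:ℕ):ℝ))) * Real.exp (v (1/μ) - v (⌊y/μ⌋₊:ℕ)) := by
        rw [hFdef]; exact aux_F_eq d x v h0 h1
      exact hFeq.symm
  have hxnull : ν {x} = 0 := by
    rw [hνdef, Measure.restrict_apply (measurableSet_singleton x)]
    exact measure_mono_null Set.inter_subset_left (measure_singleton x)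
  have hlim : ∀ᵐ y ∂ν, Tendsto (fun μ => F μ y) l (nhds (f y)) := by
    have h1 : ∀ᵐ y ∂ν, y ≠ x := by
      rw [ae_iff]
      convert hxnull using 2
      ext y; simp
    filter_upwards [h1, ae_restrict_mem measurableSet_Ici] with y hne hy
    exact hptw y hy hne
  -- dominated convergence
  have htend : Tendsto (fun μ => ∫ y, F μ y ∂ν) l (nhds (∫ y, f y ∂ν)) :=
    tendsto_integral_filter_of_dominated_convergence D
      (Eventually.of_forall hmeas) hbound hDint hlim
  -- identify the limit integral
  have hfint : ∫ y, f y ∂ν = ∫ y in Set.Ioi x, y ^ (d-1) * Real.exp (-y) := by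
    have hss : Set.Ioi x ∩ Set.Ici 0 = Set.Ioi x :=
      Set.inter_eq_left.2 (fun y hy => le_of_lt (lt_trans hx hy))
    rw [hfdef, hνdef, integral_indicator measurableSet_Ioi,
      Measure.restrict_restrict measurableSet_Ioi, hss]
  -- identify the prelimit expression
  have heq : ∀ᶠ μ in l, μ ^ d * Real.exp (v (1 / μ)) *
      ∑' k : ℕ, (if x ≤ μ * (k:ℝ) then (k : ℝ) ^ (d - 1) *
        Real.exp (-(μ * (k:ℝ)) - v k) else 0) = ∫ y, F μ y ∂ν := by
    filter_upwards [hgood] with μ ⟨h0, h1, h2, h3⟩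
    have hint : Integrable (F μ) ν := by
      apply Integrable.mono' hDint (hmeas μ)
      filter_upwards [ae_restrict_mem measurableSet_Ici] with y hy
      exact hFbound μ h0 h1 h2 h3 y hy
    have hunion : Set.Ici (0:ℝ) = ⋃ k : ℕ, Set.Ico (μ * (k:ℝ)) (μ * (k:ℝ) + μ) := by
      ext y
      simp only [Set.mem_Ici, Set.mem_iUnion, Set.mem_Ico]
      constructor
      · intro hy
        refine ⟨⌊y/μ⌋₊, ?_, ?_⟩
        · have h' : ((⌊y/μ⌋₊:ℕ):ℝ) ≤ y/μ := Nat.floor_le (div_nonneg hy h0.le)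
          calc μ * ((⌊y/μ⌋₊:ℕ):ℝ) ≤ μ * (y/μ) := mul_le_mul_of_nonneg_left h' h0.le
            _ = y := mul_div_cancel₀ _ h0.ne'
        · have h' : y/μ < (⌊y/μ⌋₊:ℕ) + 1 := Nat.lt_floor_add_one _
          have := mul_lt_mul_of_pos_left h' h0
          rw [mul_div_cancel₀ _ h0.ne'] at this
          nlinarith
      · rintro ⟨k, hk1, _⟩
        have : (0:ℝ) ≤ μ * (k:ℝ) := by positivity
        linarith
    have hdisj : Pairwise (Function.onFun Disjoint fun k : ℕ => Set.Ico (μ * (k:ℝ)) (μ * (k:ℝ) + μ)) := by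
      intro i j hij
      apply Set.Ico_disjoint_Ico.2
      rcases hij.lt_or_gt with h | h
      · have : (i:ℝ) + 1 ≤ (j:ℝ) := by exact_mod_cast h
        calc min (μ * (i:ℝ) + μ) (μ * (j:ℝ) + μ) ≤ μ * (i:ℝ) + μ := min_le_left _ _
          _ ≤ μ * (j:ℝ) := by nlinarith
          _ ≤ max (μ * (i:ℝ)) (μ * (j:ℝ)) := le_max_right _ _
      · have : (j:ℝ) + 1 ≤ (i:ℝ) := by exact_mod_cast h
        calc min (μ * (i:ℝ) + μ) (μ * (j:ℝ) + μ) ≤ μ * (j:ℝ) + μ := min_le_right _ _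
          _ ≤ μ * (i:ℝ) := by nlinarith
          _ ≤ max (μ * (i:ℝ)) (μ * (j:ℝ)) := le_max_left _ _
    have hmeasIco : ∀ k : ℕ, MeasurableSet (Set.Ico (μ * (k:ℝ)) (μ * (k:ℝ) + μ)) :=
      fun k => measurableSet_Ico
    have hintOn : IntegrableOn (F μ) (⋃ k : ℕ, Set.Ico (μ * (k:ℝ)) (μ * (k:ℝ) + μ)) := by
      rw [← hunion]; exact hint
    have hsplit : ∫ y, F μ y ∂ν = ∑' k : ℕ, ∫ y in Set.Ico (μ * (k:ℝ)) (μ * (k:ℝ) + μ), F μ y := by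
      rw [hνdef]
      have : (volume : Measure ℝ).restrict (Set.Ici 0)
          = volume.restrict (⋃ k : ℕ, Set.Ico (μ * (k:ℝ)) (μ * (k:ℝ) + μ)) := by rw [← hunion]
      rw [this]
      exact integral_iUnion hmeasIco hdisj hintOn
    have hpiece : ∀ k : ℕ, ∫ y in Set.Ico (μ * (k:ℝ)) (μ * (k:ℝ) + μ), F μ y
        = μ * (μ ^ d * Real.exp (v (1/μ)) * (if x ≤ μ * (k:ℝ) then (k:ℝ) ^ (d-1) *
            Real.exp (-(μ * (k:ℝ)) - v k) else 0) / μ) := by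
      intro k
      have hfloor : ∀ y ∈ Set.Ico (μ * (k:ℝ)) (μ * (k:ℝ) + μ), ⌊y/μ⌋₊ = k := by
        rintro y ⟨hy1, hy2⟩
        have hy0 : (0:ℝ) ≤ y := le_trans (by positivity) hy1
        rw [Nat.floor_eq_iff (div_nonneg hy0 h0.le)]
        constructor
        · rw [le_div_iff₀ h0]; nlinarith
        · rw [div_lt_iff₀ h0]; push_cast; nlinarith
      have hcongr : ∫ y in Set.Ico (μ * (k:ℝ)) (μ * (k:ℝ) + μ), F μ y
          = ∫ _y in Set.Ico (μ * (k:ℝ)) (μ * (k:ℝ) + μ), (μ ^ d * Real.exp (v (1/μ)) *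
            (if x ≤ μ * (k:ℝ) then (k:ℝ)^(d-1) * Real.exp (-(μ*(k:ℝ)) - v k) else 0) / μ) := by
        apply setIntegral_congr_fun measurableSet_Ico
        intro y hy
        simp only [hFdef, hfloor y hy]
      rw [hcongr, setIntegral_const, Real.volume_real_Ico,
        (by ring : μ * (k:ℝ) + μ - μ * (k:ℝ) = μ), max_eq_left h0.le, smul_eq_mul]
    have hfin : ∫ y, F μ y ∂ν = μ ^ d * Real.exp (v (1 / μ)) *
        ∑' k : ℕ, (if x ≤ μ * (k:ℝ) then (k:ℝ) ^ (d - 1) *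
          Real.exp (-(μ * (k:ℝ)) - v k) else 0) := by
      rw [hsplit]
      rw [show (fun k : ℕ => ∫ y in Set.Ico (μ * (k:ℝ)) (μ * (k:ℝ) + μ), F μ y)
          = fun k : ℕ => (μ ^ d * Real.exp (v (1 / μ))) *
            (if x ≤ μ * (k:ℝ) then (k:ℝ) ^ (d - 1) * Real.exp (-(μ * (k:ℝ)) - v k) else 0)
        from funext fun k => by rw [hpiece k]; field_simp]
      exact tsum_mul_left
    exact hfin.symm
  rw [hfint] at htend
  exact htend.congr' (heq.mono fun μ h => h.symm)
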